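/- Let α, β ∈ (0,1], let G be the right-focal Green's function defined by G(t,s) = (1/α)s^α if s ≤ t and G(t,s) = (1/α)t^α if t ≤ s, and let h : [0,1] → ℝ be continuous. Define x(t) = ∫₀¹ G(t,s) h(s) s^{β−1} ds. Then x(0) = 0, the limit lim_{t→1⁻} t^{1−α} x′(t) exists and equals 0, and for every t ∈ (0,1), x is differentiable at t, the function y(t) := t^{1−α} x′(t) is differentiable at t, and −t^{1−β} y′(t) = h(t). -/

import Mathlib

open MeasureTheory Set Filter Real Topology

/-- With `α, β ∈ (0,1]`, `G` the right-focal Green's function, `h` continuous on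
`[0,1]`, and `x(t) = ∫₀¹ G(t,s) h(s) s^{β−1} ds`, we have `x(0) = 0`, the limit
`lim_{t→1⁻} t^{1−α} x′(t)` exists and equals `0`, and, for every `t ∈ (0,1)`, `x` is
differentiable at `t`, `y(u) := u^{1−α} x′(u)` is differentiable at `t`, and
`−t^{1−β} y′(t) = h(t)`. -/
theorem right_focal_greens_function_solves_bvp
    (α β : ℝ) (hα : α ∈ Set.Ioc (0:ℝ) 1) (hβ : β ∈ Set.Ioc (0:ℝ) 1)
    (G : ℝ → ℝ → ℝ)
    (hG : ∀ t s : ℝ, G t s = if s ≤ t then (1 / α) * s ^ α else (1 / α) * t ^ α)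
    (h : ℝ → ℝ) (hh : ContinuousOn h (Set.Icc 0 1))
    (x : ℝ → ℝ) (hx : ∀ t : ℝ, x t = ∫ s in (0:ℝ)..1, G t s * h s * s ^ (β - 1)) :
    x 0 = 0 ∧
    Filter.Tendsto (fun t : ℝ => t ^ (1 - α) * deriv x t)
      (nhdsWithin 1 (Set.Iio (1:ℝ))) (nhds 0) ∧
    ∀ t ∈ Set.Ioo (0:ℝ) 1,
      DifferentiableAt ℝ x t ∧
      DifferentiableAt ℝ (fun u : ℝ => u ^ (1 - α) * deriv x u) t ∧
      -(t ^ (1 - β)) * deriv (fun u : ℝ => u ^ (1 - α) * deriv x u) t = h t := by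
  obtain ⟨hα0, hα1⟩ := hα
  obtain ⟨hβ0, hβ1⟩ := hβ
  have hαne : α ≠ 0 := ne_of_gt hα0
  set f : ℝ → ℝ := fun s => h s * s ^ (β - 1) with hfdef
  set g : ℝ → ℝ := fun s => s ^ α * (h s * s ^ (β - 1)) with hgdef
  have huIcc : uIcc (0:ℝ) 1 = Icc 0 1 := uIcc_of_le (by norm_num)
  -- integrability
  have hrpow : IntegrableOn (fun s : ℝ => s ^ (β - 1)) (Icc (0:ℝ) 1) volume := by
    have h1 : IntervalIntegrable (fun s : ℝ => s ^ (β - 1)) volume 0 1 :=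
      intervalIntegral.intervalIntegrable_rpow' (by linarith)
    rw [intervalIntegrable_iff_integrableOn_Ioc_of_le (by norm_num)] at h1
    rwa [integrableOn_Icc_iff_integrableOn_Ioc]
  have hfIcc : IntegrableOn f (Icc (0:ℝ) 1) volume :=
    IntegrableOn.continuousOn_mul hh hrpow isCompact_Icc
  have hcont_pow : Continuous fun s : ℝ => s ^ α :=
    continuous_iff_continuousAt.2 fun s => Real.continuousAt_rpow_const s α (Or.inr hα0.le)
  have hgIcc : IntegrableOn g (Icc (0:ℝ) 1) volume :=
    IntegrableOn.continuousOn_mul hcont_pow.continuousOn hfIcc isCompact_Icc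
  have hfint : IntervalIntegrable f volume 0 1 := by
    apply IntegrableOn.intervalIntegrable; rwa [huIcc]
  have hgint : IntervalIntegrable g volume 0 1 := by
    apply IntegrableOn.intervalIntegrable; rwa [huIcc]
  -- continuity on the open interval
  have hfcontOn : ContinuousOn f (Ioo (0:ℝ) 1) := by
    apply ContinuousOn.mul (hh.mono Ioo_subset_Icc_self)
    intro s hs
    exact (Real.continuousAt_rpow_const s (β - 1) (Or.inl hs.1.ne')).continuousWithinAt
  have hgcontOn : ContinuousOn g (Ioo (0:ℝ) 1) :=
    hcont_pow.continuousOn.mul hfcontOn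
  have hopen : IsOpen (Ioo (0:ℝ) 1) := isOpen_Ioo
  -- the splitting of the integral
  have hxsplit : ∀ t ∈ Icc (0:ℝ) 1,
      x t = (1/α) * (∫ s in (0:ℝ)..t, g s) + (1/α) * t ^ α * (∫ s in t..1, f s) := by
    intro t ht
    have h0t : uIcc (0:ℝ) t = Icc 0 t := uIcc_of_le ht.1
    have ht1 : uIcc t (1:ℝ) = Icc t 1 := uIcc_of_le ht.2
    have e1 : EqOn (fun s => (1/α) * g s) (fun s => G t s * h s * s ^ (β - 1)) (Icc 0 t) := by
      intro s hs
      simp only [hgdef, hG, if_pos hs.2]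
      ring
    have e2 : EqOn (fun s => (1/α) * t ^ α * f s) (fun s => G t s * h s * s ^ (β - 1))
        (Icc t 1) := by
      intro s hs
      simp only [hfdef, hG]
      split_ifs with hst
      · have hst' : s = t := le_antisymm hst hs.1
        subst hst'; ring
      · ring
    have i1 : IntervalIntegrable (fun s => G t s * h s * s ^ (β - 1)) volume 0 t := by
      apply IntegrableOn.intervalIntegrable
      rw [h0t]
      exact IntegrableOn.congr_fun
        ((hgIcc.mono_set (Icc_subset_Icc le_rfl ht.2)).const_mul (1/α)) e1 measurableSet_Icc
    have i2 : IntervalIntegrable (fun s => G t s * h s * s ^ (β - 1)) volume t 1 := by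
      apply IntegrableOn.intervalIntegrable
      rw [ht1]
      exact IntegrableOn.congr_fun
        ((hfIcc.mono_set (Icc_subset_Icc ht.1 le_rfl)).const_mul ((1/α) * t ^ α)) e2
        measurableSet_Icc
    have q1 : (∫ s in (0:ℝ)..t, G t s * h s * s ^ (β - 1)) = (1/α) * ∫ s in (0:ℝ)..t, g s := by
      rw [← intervalIntegral.integral_const_mul]
      apply intervalIntegral.integral_congr
      rw [h0t]; exact e1.symm
    have q2 : (∫ s in t..(1:ℝ), G t s * h s * s ^ (β - 1)) =
        (1/α) * t ^ α * ∫ s in t..(1:ℝ), f s := by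
      rw [← intervalIntegral.integral_const_mul]
      apply intervalIntegral.integral_congr
      rw [ht1]; exact e2.symm
    rw [hx t, ← intervalIntegral.integral_add_adjacent_intervals i1 i2, q1, q2]
  -- derivatives on the open interval
  have key : ∀ t ∈ Ioo (0:ℝ) 1,
      HasDerivAt x (t ^ (α - 1) * ∫ s in t..(1:ℝ), f s) t ∧
      HasDerivAt (fun u => ∫ s in u..(1:ℝ), f s) (-(f t)) t := by
    intro t ht
    have htmem : Ioo (0:ℝ) 1 ∈ 𝓝 t := hopen.mem_nhds ht
    have hgmeas : StronglyMeasurableAtFilter g (𝓝 t) volume :=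
      hgcontOn.stronglyMeasurableAtFilter hopen t ht
    have hfmeas : StronglyMeasurableAtFilter f (𝓝 t) volume :=
      hfcontOn.stronglyMeasurableAtFilter hopen t ht
    have hA : HasDerivAt (fun u => ∫ s in (0:ℝ)..u, g s) (g t) t :=
      intervalIntegral.integral_hasDerivAt_right
        (hgint.mono_set (by rw [huIcc, uIcc_of_le ht.1.le]; exact Icc_subset_Icc le_rfl ht.2.le))
        hgmeas (hgcontOn.continuousAt htmem)
    have hB : HasDerivAt (fun u => ∫ s in u..(1:ℝ), f s) (-(f t)) t :=
      intervalIntegral.integral_hasDerivAt_left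
        (hfint.mono_set (by rw [huIcc, uIcc_of_le ht.2.le]; exact Icc_subset_Icc ht.1.le le_rfl))
        hfmeas (hfcontOn.continuousAt htmem)
    refine ⟨?_, hB⟩
    have hpow : HasDerivAt (fun u : ℝ => (1/α) * u ^ α) ((1/α) * (α * t ^ (α - 1))) t :=
      (Real.hasDerivAt_rpow_const (p := α) (Or.inl ht.1.ne')).const_mul (1/α)
    have hsum : HasDerivAt
        (fun u => (1/α) * (∫ s in (0:ℝ)..u, g s) + (1/α) * u ^ α * (∫ s in u..(1:ℝ), f s))
        ((1/α) * g t + ((1/α) * (α * t ^ (α - 1)) * (∫ s in t..(1:ℝ), f s)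
          + (1/α) * t ^ α * (-(f t)))) t :=
      (hA.const_mul (1/α)).add (hpow.mul hB)
    have hxeq : x =ᶠ[𝓝 t]
        fun u => (1/α) * (∫ s in (0:ℝ)..u, g s) + (1/α) * u ^ α * (∫ s in u..(1:ℝ), f s) := by
      filter_upwards [htmem] with u hu
      exact hxsplit u (Ioo_subset_Icc_self hu)
    have hfin := hsum.congr_of_eventuallyEq hxeq
    refine hfin.congr_deriv ?_
    have hgt : g t = t ^ α * f t := rfl
    rw [hgt]
    field_simp
    ring
  have derivx : ∀ t ∈ Ioo (0:ℝ) 1, deriv x t = t ^ (α - 1) * ∫ s in t..(1:ℝ), f s :=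
    fun t ht => ((key t ht).1).deriv
  -- y agrees with the primitive near each interior point
  have hyeq : ∀ t ∈ Ioo (0:ℝ) 1,
      (fun u : ℝ => u ^ (1 - α) * deriv x u) =ᶠ[𝓝 t] fun u => ∫ s in u..(1:ℝ), f s := by
    intro t ht
    filter_upwards [hopen.mem_nhds ht] with u hu
    rw [derivx u hu, ← mul_assoc, ← Real.rpow_add hu.1,
      show (1:ℝ) - α + (α - 1) = 0 by ring, Real.rpow_zero, one_mul]
  -- x 0 = 0
  have hx0 : x 0 = 0 := by
    rw [hx 0]
    have hz : ∀ s ∈ uIcc (0:ℝ) 1, G 0 s * h s * s ^ (β - 1) = (fun _ : ℝ => (0:ℝ)) s := by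
      intro s hs
      rw [huIcc] at hs
      rw [hG]
      split_ifs with h0
      · have hs0 : s = 0 := le_antisymm h0 hs.1
        simp [hs0, Real.zero_rpow hαne]
      · simp [Real.zero_rpow hαne]
    rw [intervalIntegral.integral_congr hz, intervalIntegral.integral_zero]
  -- the limit at 1⁻
  have hBcont : ContinuousOn (fun u => ∫ s in u..(1:ℝ), f s) (Icc (0:ℝ) 1) := by
    have := intervalIntegral.continuousOn_primitive_interval_left
      (show IntegrableOn f (uIcc (0:ℝ) 1) volume by rwa [huIcc])
    rwa [huIcc] at this
  have hlim : Tendsto (fun u => ∫ s in u..(1:ℝ), f s) (𝓝[<] (1:ℝ)) (𝓝 0) := by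
    have h1 : Tendsto (fun u => ∫ s in u..(1:ℝ), f s) (𝓝[Icc (0:ℝ) 1] 1)
        (𝓝 (∫ s in (1:ℝ)..(1:ℝ), f s)) := hBcont 1 (by norm_num)
    rw [intervalIntegral.integral_same] at h1
    rw [show 𝓝[<] (1:ℝ) = 𝓝[Ioo (0:ℝ) 1] 1 from
      (nhdsWithin_Ioo_eq_nhdsLT (by norm_num)).symm]
    exact h1.mono_left (nhdsWithin_mono _ Ioo_subset_Icc_self)
  have hlim2 : Tendsto (fun t : ℝ => t ^ (1 - α) * deriv x t) (𝓝[<] (1:ℝ)) (𝓝 0) := by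
    apply hlim.congr'
    filter_upwards [Ioo_mem_nhdsLT_of_mem (show (1:ℝ) ∈ Ioc (0:ℝ) 1 by norm_num)] with u hu
    rw [derivx u hu, ← mul_assoc, ← Real.rpow_add hu.1,
      show (1:ℝ) - α + (α - 1) = 0 by ring, Real.rpow_zero, one_mul]
  refine ⟨hx0, hlim2, fun t ht => ?_⟩
  obtain ⟨hXd, hBd⟩ := key t ht
  have hyd := hBd.congr_of_eventuallyEq (hyeq t ht)
  refine ⟨hXd.differentiableAt, hyd.differentiableAt, ?_⟩
  rw [hyd.deriv]
  have hone : t ^ (1 - β) * t ^ (β - 1) = 1 := by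
    rw [← Real.rpow_add ht.1, show (1:ℝ) - β + (β - 1) = 0 by ring, Real.rpow_zero]
  calc -(t ^ (1 - β)) * -(f t) = (t ^ (1 - β) * t ^ (β - 1)) * h t := by
        simp only [hfdef]; ring
    _ = h t := by rw [hone, one_mul]
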